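/- A term of the λ⊥-calculus has at least one right inverse if and only if it reduces to a head normal form of the shape λz.zM₁…Mₘ. -/
import Mathlib


/-- Terms of the λ⊥-calculus (de Bruijn indices). -/
inductive Tm : Type
  | var : ℕ → Tm
  | bot : Tm
  | lam : Tm → Tm
  | app : Tm → Tm → Tm
  deriving DecidableEq

namespace Tm

/-- Lift (shift by one) all de Bruijn indices ≥ k. -/
def lift : Tm → ℕ → Tm
  | var n, k => if n < k then var n else var (n+1)
  | bot, _ => bot
  | lam M, k => lam (lift M (k+1))
  | app M N, k => app (lift M k) (lift N k)

/-- Capture-avoiding substitution of N for variable k. -/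
def subst : Tm → ℕ → Tm → Tm
  | var n, k, N => if n < k then var n else if n = k then N else var (n-1)
  | bot, _, _ => bot
  | lam M, k, N => lam (subst M (k+1) (lift N 0))
  | app M P, k, N => app (subst M k N) (subst P k N)

/-- One-step β⊥-reduction (compatible closure). -/
inductive Step : Tm → Tm → Prop
  | beta (M N : Tm) : Step (app (lam M) N) (subst M 0 N)
  | botApp (N : Tm) : Step (app bot N) bot
  | botLam : Step (lam bot) bot
  | appL {M M'} (N) : Step M M' → Step (app M N) (app M' N)
  | appR (M) {N N'} : Step N N' → Step (app M N) (app M N')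
  | lamC {M M'} : Step M M' → Step (lam M) (lam M')

/-- Multi-step reduction. -/
def Red : Tm → Tm → Prop := Relation.ReflTransGen Step

/-- β⊥-conversion: M = N iff they have a common reduct. -/
def Conv (M N : Tm) : Prop := ∃ P, Red M P ∧ Red N P

/-- The identity combinator I = λx.x. -/
def iTm : Tm := lam (var 0)

/-- Composition M ∘ N = λz.M(Nz). -/
def comp (M N : Tm) : Tm := lam (app (lift M 0) (app (lift N 0) (var 0)))

/-- Apply M to a list of arguments. -/
def applist (M : Tm) (Ms : List Tm) : Tm := Ms.foldl app M

/-- Iterated λ-abstraction. -/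
def iterLam : ℕ → Tm → Tm
  | 0, M => M
  | n+1, M => lam (iterLam n M)

/-- The selector λt x₁ … xₘ. t  (a simple right inverse). -/
def sel (m : ℕ) : Tm := iterLam (m+1) (var m)

/-- Number of initial λ-abstractions of a term. -/
def leadLams : Tm → ℕ
  | lam M => leadLams M + 1
  | _ => 0

end Tm

mutual
/-- Strict intersection types μ ::= φ | ω | σ → μ. -/
inductive STy : Type
  | tvar : ℕ → STy
  | omega : STy
  | arrow : ITy → STy → STy
/-- Intersections σ ::= μ | σ ∧ σ. -/
inductive ITy : Type
  | strict : STy → ITy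
  | inter : ITy → ITy → ITy
end

/-- The subtyping preorder on (strict) intersection types. -/
inductive SubTy : ITy → ITy → Prop
  | refl (σ) : SubTy σ σ
  | trans {σ τ ρ} : SubTy σ τ → SubTy τ ρ → SubTy σ ρ
  | toOmega (σ) : SubTy σ (.strict .omega)
  | omegaArr : SubTy (.strict .omega) (.strict (.arrow (.strict .omega) .omega))
  | interL (σ τ) : SubTy (.inter σ τ) σ
  | interR (σ τ) : SubTy (.inter σ τ) τ
  | interMono {σ₁ σ₂ τ₁ τ₂} : SubTy σ₁ τ₁ → SubTy σ₂ τ₂ → SubTy (.inter σ₁ σ₂) (.inter τ₁ τ₂)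
  | arrow {σ τ : ITy} {μ ν : STy} : SubTy τ σ → SubTy (.strict μ) (.strict ν) →
      SubTy (.strict (.arrow σ μ)) (.strict (.arrow τ ν))

/-- σ ∼ τ : mutual subtyping. -/
def EqvTy (σ τ : ITy) : Prop := SubTy σ τ ∧ SubTy τ σ

/-- μ is a conjunct (component) of the intersection σ. -/
inductive IsComp : STy → ITy → Prop
  | strict (μ) : IsComp μ (.strict μ)
  | left {μ σ} (τ) : IsComp μ σ → IsComp μ (.inter σ τ)
  | right {μ τ} (σ) : IsComp μ τ → IsComp μ (.inter σ τ)

/-- The essential intersection type assignment system (contexts are de Bruijn lists). -/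
inductive Der : List ITy → Tm → STy → Prop
  | var {Γ n σ μ} : Γ[n]? = some σ → IsComp μ σ → Der Γ (.var n) μ
  | omega (Γ M) : Der Γ M .omega
  | sub {Γ M μ ν} : Der Γ M μ → SubTy (.strict μ) (.strict ν) → Der Γ M ν
  | lam {Γ M σ μ} : Der (σ :: Γ) M μ → Der Γ (.lam M) (.arrow σ μ)
  | app {Γ M N σ μ} : Der Γ M (.arrow σ μ) → (∀ ν, IsComp ν σ → Der Γ N ν) →
      Der Γ (.app M N) μ

/-- A strict type is inhabited if some closed term has it. -/
def InhabS (μ : STy) : Prop := ∃ M, Der [] M μ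

/-- An intersection is inhabited if a single closed term has all its conjuncts. -/
def InhabI (σ : ITy) : Prop := ∃ M, ∀ μ, IsComp μ σ → Der [] M μ

/-- σ → ρ is inhabited: one term inhabits σ → μ for every conjunct μ of ρ. -/
def InhabArrow (σ ρ : ITy) : Prop := ∃ M, ∀ μ, IsComp μ ρ → Der [] M (.arrow σ μ)

/-- ρ₁ → … → ρₘ → μ. -/
def arrows (l : List ITy) (μ : STy) : STy := l.foldr .arrow μ

/-- μ ◁ ν : μ is a retract of ν. -/
def Retract (μ ν : STy) : Prop :=
  ∃ L R, Der [] L (.arrow (.strict ν) μ) ∧ Der [] R (.arrow (.strict μ) ν) ∧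
    Tm.Conv (Tm.comp L R) Tm.iTm


namespace Tm

theorem lift_lift (M : Tm) : ∀ i j, i ≤ j → lift (lift M i) (j+1) = lift (lift M j) i := by
  induction M with
  | var n =>
    intro i j h; simp only [lift]
    split_ifs <;> simp only [lift] <;> split_ifs <;> first | rfl | omega
  | bot => intros; rfl
  | lam M ih =>
    intro i j h
    simp only [lift]
    rw [ih (i+1) (j+1) (by omega)]
  | app M N ihM ihN => intro i j h; simp [lift, ihM _ _ h, ihN _ _ h]

theorem lift_subst_low (M : Tm) :
    ∀ i k N, i ≤ k → lift (subst M k N) i = subst (lift M i) (k+1) (lift N i) := by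
  induction M with
  | var n =>
    intro i k N h; simp only [subst, lift]
    split_ifs <;> simp only [subst, lift] <;> split_ifs <;>
      first | rfl | omega | (congr 1; omega)
  | bot => intros; rfl
  | lam M ih =>
    intro i k N h
    simp only [subst, lift]
    rw [ih (i+1) (k+1) (lift N 0) (by omega), lift_lift N 0 i (by omega)]
  | app M P ihM ihP => intro i k N h; simp [subst, lift, ihM _ _ _ h, ihP _ _ _ h]

theorem lift_subst_high (M : Tm) :
    ∀ j k N, j ≤ k → lift (subst M j N) k = subst (lift M (k+1)) j (lift N k) := by
  induction M with
  | var n =>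
    intro j k N h; simp only [subst, lift]
    split_ifs <;> simp only [subst, lift] <;> split_ifs <;>
      first | rfl | omega | (congr 1; omega)
  | bot => intros; rfl
  | lam M ih =>
    intro j k N h
    simp only [subst, lift]
    rw [ih (j+1) (k+1) (lift N 0) (by omega), lift_lift N 0 k (by omega)]
  | app M P ihM ihP => intro j k N h; simp [subst, lift, ihM _ _ _ h, ihP _ _ _ h]

theorem subst_lift_cancel (M : Tm) : ∀ k N, subst (lift M k) k N = M := by
  induction M with
  | var n => intro k N; simp only [lift]; split_ifs <;> simp only [subst] <;> split_ifs <;>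
      first | rfl | omega | (congr 1; omega)
  | bot => intros; rfl
  | lam M ih => intro k N; simp [lift, subst, ih]
  | app M P ihM ihP => intro k N; simp [lift, subst, ihM, ihP]

theorem subst_subst (M : Tm) :
    ∀ j k B N, j ≤ k →
      subst (subst M j B) k N = subst (subst M (k+1) (lift N j)) j (subst B k N) := by
  induction M with
  | var n =>
    intro j k B N h; simp only [subst]
    split_ifs <;>
      first
        | omega
        | (exact (subst_lift_cancel N j (subst B k N)).symm)
        | (simp only [subst]; split_ifs <;> first | rfl | omega | (congr 1; omega) | (exact (subst_lift_cancel N j (subst B k N)).symm))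
  | bot => intros; rfl
  | lam M ih =>
    intro j k B N h
    simp only [subst]
    rw [ih (j+1) (k+1) (lift B 0) (lift N 0) (by omega), lift_lift N 0 j (by omega),
      lift_subst_low B 0 k N (by omega)]
  | app M P ihM ihP => intro j k B N h; simp [subst, ihM _ _ _ _ h, ihP _ _ _ _ h]



theorem Red.refl {M : Tm} : Red M M := Relation.ReflTransGen.refl
theorem Red.trans {M N P : Tm} (h1 : Red M N) (h2 : Red N P) : Red M P :=
  Relation.ReflTransGen.trans h1 h2
theorem Step.red {M N : Tm} (h : Step M N) : Red M N := Relation.ReflTransGen.single h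

theorem red_appL {M M' : Tm} (N : Tm) (h : Red M M') : Red (app M N) (app M' N) := by
  induction h with
  | refl => exact Red.refl
  | tail _ s ih => exact ih.trans (Step.appL N s).red

theorem red_appR (M : Tm) {N N' : Tm} (h : Red N N') : Red (app M N) (app M N') := by
  induction h with
  | refl => exact Red.refl
  | tail _ s ih => exact ih.trans (Step.appR M s).red

theorem red_app {M M' N N' : Tm} (h1 : Red M M') (h2 : Red N N') :
    Red (app M N) (app M' N') := (red_appL N h1).trans (red_appR M' h2)

theorem red_lam {M M' : Tm} (h : Red M M') : Red (lam M) (lam M') := by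
  induction h with
  | refl => exact Red.refl
  | tail _ s ih => exact ih.trans (Step.lamC s).red

theorem step_lift {M M' : Tm} (h : Step M M') : ∀ k, Step (lift M k) (lift M' k) := by
  induction h with
  | beta M N => intro k; rw [lift_subst_high M 0 k N (by omega)]; exact Step.beta _ _
  | botApp N => intro k; exact Step.botApp _
  | botLam => intro k; exact Step.botLam
  | appL N _ ih => intro k; exact Step.appL _ (ih k)
  | appR M _ ih => intro k; exact Step.appR _ (ih k)
  | lamC _ ih => intro k; exact Step.lamC (ih (k+1))

theorem red_lift {M M' : Tm} (h : Red M M') (k : ℕ) : Red (lift M k) (lift M' k) := by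
  induction h with
  | refl => exact Red.refl
  | tail _ s ih => exact ih.trans (step_lift s k).red

theorem lift_eq_bot {M : Tm} {k : ℕ} (h : lift M k = bot) : M = bot := by
  cases M <;> simp only [lift] at h <;> first | rfl | (split_ifs at h <;> cases h) | cases h

theorem lift_eq_lam {M P : Tm} {k : ℕ} (h : lift M k = lam P) :
    ∃ P₀, M = lam P₀ ∧ P = lift P₀ (k+1) := by
  cases M <;> simp only [lift] at h
  case lam P₀ => exact ⟨P₀, rfl, (Tm.lam.inj h).symm⟩
  case var => split_ifs at h <;> cases h
  all_goals cases h

theorem lift_eq_app {M P Q : Tm} {k : ℕ} (h : lift M k = app P Q) :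
    ∃ P₀ Q₀, M = app P₀ Q₀ ∧ P = lift P₀ k ∧ Q = lift Q₀ k := by
  cases M <;> simp only [lift] at h
  case app P₀ Q₀ => exact ⟨P₀, Q₀, rfl, (Tm.app.injEq .. ▸ h).1.symm, (Tm.app.injEq .. ▸ h).2.symm⟩
  case var => split_ifs at h <;> cases h
  all_goals cases h

theorem step_lift_inv {M : Tm} : ∀ {k X}, Step (lift M k) X → ∃ M', X = lift M' k ∧ Step M M' := by
  induction M with
  | var n => intro k X h; simp only [lift] at h; split_ifs at h <;> cases h
  | bot => intro k X h; cases h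
  | lam M ih =>
    intro k X h
    simp only [lift] at h
    generalize hB : lift M (k+1) = B at h
    cases h with
    | botLam =>
      have : M = bot := lift_eq_bot hB
      subst this; exact ⟨bot, rfl, Step.botLam⟩
    | lamC s =>
      rw [← hB] at s
      obtain ⟨M', rfl, s'⟩ := ih s
      exact ⟨lam M', rfl, Step.lamC s'⟩
  | app P Q ihP ihQ =>
    intro k X h
    simp only [lift] at h
    generalize hA : lift P k = A at h
    generalize hB : lift Q k = B at h
    cases h with
    | beta C N =>
      obtain ⟨P₀, rfl, hC⟩ := lift_eq_lam hA
      refine ⟨subst P₀ 0 Q, ?_, Step.beta _ _⟩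
      rw [lift_subst_high P₀ 0 k Q (by omega), hC, hB]
    | botApp =>
      have : P = bot := lift_eq_bot hA
      subst this; exact ⟨bot, rfl, Step.botApp Q⟩
    | appL _ s =>
      rw [← hA] at s
      obtain ⟨P', rfl, s'⟩ := ihP s
      exact ⟨app P' Q, by rw [← hB]; rfl, Step.appL Q s'⟩
    | appR _ s =>
      rw [← hB] at s
      obtain ⟨Q', rfl, s'⟩ := ihQ s
      exact ⟨app P Q', by rw [← hA]; rfl, Step.appR P s'⟩

theorem red_lift_inv {A X : Tm} {k : ℕ} (h : Red A X) :
    ∀ M, A = lift M k → ∃ M', X = lift M' k ∧ Red M M' := by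
  induction h with
  | refl => exact fun M hM => ⟨M, hM, Red.refl⟩
  | tail _ s ih =>
    intro M hM
    obtain ⟨M', rfl, r⟩ := ih M hM
    obtain ⟨M'', rfl, s'⟩ := step_lift_inv s
    exact ⟨M'', rfl, r.trans s'.red⟩

theorem no_step_bot {X : Tm} (h : Step bot X) : False := by cases h
theorem no_step_var {n : ℕ} {X : Tm} (h : Step (var n) X) : False := by cases h

theorem red_bot_eq {X : Tm} (h : Red bot X) : X = bot := by
  induction h with
  | refl => rfl
  | tail _ s ih => subst ih; exact absurd s no_step_bot

theorem red_var_eq {n : ℕ} {X : Tm} (h : Red (var n) X) : X = var n := by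
  induction h with
  | refl => rfl
  | tail _ s ih => subst ih; exact absurd s no_step_var

theorem red_lam_inv {P X : Tm} (h : Red (lam P) X) :
    (∃ P', X = lam P' ∧ Red P P') ∨ X = bot := by
  induction h with
  | refl => exact Or.inl ⟨P, rfl, Red.refl⟩
  | tail _ s ih =>
    rcases ih with ⟨P', rfl, r⟩ | rfl
    · cases s with
      | botLam => exact Or.inr rfl
      | lamC s' => exact Or.inl ⟨_, rfl, r.trans s'.red⟩
    · exact absurd s no_step_bot

/-- Head step (at the spine, not under lambdas). -/
inductive HStep : Tm → Tm → Prop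
  | beta (C B) : HStep (app (lam C) B) (subst C 0 B)
  | botApp (B) : HStep (app bot B) bot
  | appL {P P'} (Q) : HStep P P' → HStep (app P Q) (app P' Q)

def HRed : Tm → Tm → Prop := Relation.ReflTransGen HStep

theorem HRed.refl {M : Tm} : HRed M M := Relation.ReflTransGen.refl
theorem HRed.trans {M N P : Tm} (h1 : HRed M N) (h2 : HRed N P) : HRed M P :=
  Relation.ReflTransGen.trans h1 h2
theorem HStep.hred {M N : Tm} (h : HStep M N) : HRed M N := Relation.ReflTransGen.single h

theorem HStep.step {M N : Tm} (h : HStep M N) : Step M N := by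
  induction h with
  | beta C B => exact Step.beta C B
  | botApp B => exact Step.botApp B
  | appL Q _ ih => exact Step.appL Q ih

theorem HRed.red {M N : Tm} (h : HRed M N) : Red M N := by
  induction h with
  | refl => exact Red.refl
  | tail _ s ih => exact ih.trans s.step.red

theorem hstep_subst {M M' : Tm} (h : HStep M M') (k : ℕ) (N : Tm) :
    HStep (subst M k N) (subst M' k N) := by
  induction h with
  | beta C B =>
    have : subst (subst C 0 B) k N = subst (subst C (k+1) (lift N 0)) 0 (subst B k N) :=
      subst_subst C 0 k B N (by omega)
    rw [this]
    exact HStep.beta _ _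
  | botApp B => exact HStep.botApp _
  | appL Q _ ih => exact HStep.appL _ ih

theorem hred_subst {M M' : Tm} (h : HRed M M') (k : ℕ) (N : Tm) :
    HRed (subst M k N) (subst M' k N) := by
  induction h with
  | refl => exact HRed.refl
  | tail _ s ih => exact ih.trans (hstep_subst s k N).hred

theorem hstep_lift {M M' : Tm} (h : HStep M M') (k : ℕ) :
    HStep (lift M k) (lift M' k) := by
  induction h with
  | beta C B =>
    have : lift (subst C 0 B) k = subst (lift C (k+1)) 0 (lift B k) :=
      lift_subst_high C 0 k B (by omega)
    rw [this]
    exact HStep.beta _ _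
  | botApp B => exact HStep.botApp _
  | appL Q _ ih => exact HStep.appL _ ih

theorem hred_lift {M M' : Tm} (h : HRed M M') (k : ℕ) : HRed (lift M k) (lift M' k) := by
  induction h with
  | refl => exact HRed.refl
  | tail _ s ih => exact ih.trans (hstep_lift s k).hred

theorem hred_appL {M M' : Tm} (N : Tm) (h : HRed M M') : HRed (app M N) (app M' N) := by
  induction h with
  | refl => exact HRed.refl
  | tail _ s ih => exact ih.trans (HStep.appL N s).hred

/-- Semi-standard reduction relation. -/
inductive St : Tm → Tm → Prop
  | var {M : Tm} {n : ℕ} : HRed M (var n) → St M (var n)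
  | bot (M : Tm) : St M bot
  | lam {M N₀ N : Tm} : HRed M (lam N₀) → St N₀ N → St M (lam N)
  | app {M P Q P' Q' : Tm} : HRed M (app P Q) → St P P' → St Q Q' → St M (app P' Q')

theorem st_refl (M : Tm) : St M M := by
  induction M with
  | var n => exact St.var HRed.refl
  | bot => exact St.bot _
  | lam M ih => exact St.lam HRed.refl ih
  | app P Q ihP ihQ => exact St.app HRed.refl ihP ihQ

theorem st_hred_left {M M₁ N : Tm} (h : HRed M M₁) (hst : St M₁ N) : St M N := by
  cases hst with
  | var h' => exact St.var (h.trans h')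
  | bot => exact St.bot _
  | lam h' s => exact St.lam (h.trans h') s
  | app h' s1 s2 => exact St.app (h.trans h') s1 s2

theorem st_lift {M N : Tm} (h : St M N) : ∀ k, St (lift M k) (lift N k) := by
  induction h with
  | var h =>
    intro k
    have := hred_lift h k
    simp only [lift] at this ⊢
    split_ifs at this ⊢ <;> exact St.var this
  | bot => intro k; exact St.bot _
  | lam h _ ih =>
    intro k
    have := hred_lift h k
    simp only [lift] at this ⊢
    exact St.lam this (ih (k+1))
  | app h _ _ ih1 ih2 =>
    intro k
    have := hred_lift h k
    simp only [lift] at this ⊢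
    exact St.app this (ih1 k) (ih2 k)

theorem st_subst {A A' : Tm} (h : St A A') :
    ∀ k {B B' : Tm}, St B B' → St (subst A k B) (subst A' k B') := by
  induction h with
  | @var M n h =>
    intro k B B' hB
    have hs := hred_subst h k B
    simp only [subst] at hs ⊢
    split_ifs at hs ⊢ with h1 h2
    · exact St.var hs
    · exact st_hred_left hs hB
    · exact St.var hs
  | bot => intro k B B' hB; exact St.bot _
  | lam h _ ih =>
    intro k B B' hB
    have hs := hred_subst h k B
    simp only [subst] at hs ⊢
    exact St.lam hs (ih (k+1) (st_lift hB 0))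
  | app h _ _ ih1 ih2 =>
    intro k B B' hB
    have hs := hred_subst h k B
    simp only [subst] at hs ⊢
    exact St.app hs (ih1 k hB) (ih2 k hB)

theorem st_lam_inv {P C : Tm} (h : St P (lam C)) : ∃ C₀, HRed P (lam C₀) ∧ St C₀ C := by
  cases h with
  | lam h s => exact ⟨_, h, s⟩

theorem st_step {M N : Tm} (h : St M N) : ∀ {N'}, Step N N' → St M N' := by
  induction h with
  | var _ => intro N' s; exact absurd s no_step_var
  | bot => intro N' s; exact absurd s no_step_bot
  | lam h _ ih =>
    intro N' s
    cases s with
    | botLam => exact St.bot _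
    | lamC s' => exact St.lam h (ih s')
  | @app M P Q P' Q' h sP sQ ihP ihQ =>
    intro N' s
    cases s with
    | beta C' _ =>
      obtain ⟨C₀, hP, hC⟩ := st_lam_inv sP
      have hM : HRed M (subst C₀ 0 Q) :=
        (h.trans (hred_appL Q hP)).trans (HStep.beta C₀ Q).hred
      exact st_hred_left hM (st_subst hC 0 sQ)
    | botApp => exact St.bot _
    | appL _ s' => exact St.app h (ihP s') sQ
    | appR _ s' => exact St.app h sP (ihQ s')

theorem red_st {M N : Tm} (h : Red M N) : St M N := by
  induction h with
  | refl => exact st_refl M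
  | tail _ s ih => exact st_step ih s

theorem st_var_inv {M : Tm} {n : ℕ} (h : St M (var n)) : HRed M (var n) := by
  cases h with
  | var h => exact h


theorem no_hstep_bot {X : Tm} (h : HStep bot X) : False := by cases h
theorem no_hstep_var {n : ℕ} {X : Tm} (h : HStep (var n) X) : False := by cases h

theorem hred_bot_eq {X : Tm} (h : HRed bot X) : X = bot := by
  induction h with
  | refl => rfl
  | tail _ s ih => subst ih; exact absurd s no_hstep_bot

theorem applist_append (M : Tm) (L1 L2 : List Tm) :
    applist M (L1 ++ L2) = applist (applist M L1) L2 := List.foldl_append ..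

theorem applist_snoc (M : Tm) (L : List Tm) (N : Tm) :
    applist M (L ++ [N]) = app (applist M L) N := by
  rw [applist_append]; rfl

theorem red_applist_left {P Q : Tm} (h : Red P Q) (L : List Tm) :
    Red (applist P L) (applist Q L) := by
  induction L generalizing P Q with
  | nil => exact h
  | cons N L ih => exact ih (red_app h Red.refl)

theorem subst_applist (M : Tm) (L : List Tm) (k : ℕ) (N : Tm) :
    subst (applist M L) k N = applist (subst M k N) (L.map (fun X => subst X k N)) := by
  induction L generalizing M with
  | nil => rfl
  | cons P L ih => exact ih (app M P) ▸ rfl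

theorem lift_applist (M : Tm) (L : List Tm) (k : ℕ) :
    lift (applist M L) k = applist (lift M k) (L.map (fun X => lift X k)) := by
  induction L generalizing M with
  | nil => rfl
  | cons P L ih => exact ih (app M P) ▸ rfl

theorem hred_app_var {n : ℕ} : ∀ {T : Tm}, HRed T (var n) → ∀ A B, T = app A B →
    ∃ C, HRed A (lam C) ∧ HRed (subst C 0 B) (var n) := by
  intro T h
  induction h using Relation.ReflTransGen.head_induction_on with
  | refl => intro A B heq; cases heq
  | @head T X s hrest ih =>
    intro A B heq
    subst heq
    cases s with
    | beta C _ => exact ⟨C, HRed.refl, hrest⟩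
    | botApp => exact absurd (hred_bot_eq hrest) (by simp)
    | appL _ s' =>
      obtain ⟨C, h1, h2⟩ := ih _ _ rfl
      exact ⟨C, (s'.hred).trans h1, h2⟩

theorem subst_eq_bot {C : Tm} {k : ℕ} {B : Tm} (h : subst C k B = bot) :
    C = bot ∨ (C = var k ∧ B = bot) := by
  cases C with
  | var n =>
    simp only [subst] at h
    by_cases h1 : n < k
    · rw [if_pos h1] at h; cases h
    · rw [if_neg h1] at h
      by_cases h2 : n = k
      · rw [if_pos h2] at h; exact Or.inr ⟨by rw [h2], h⟩
      · rw [if_neg h2] at h; cases h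
  | bot => exact Or.inl rfl
  | lam _ => cases h
  | app _ _ => cases h

theorem subst_eq_lam {C : Tm} {k : ℕ} {B E : Tm} (h : subst C k B = lam E) :
    (∃ E₀, C = lam E₀ ∧ E = subst E₀ (k+1) (lift B 0)) ∨ (C = var k ∧ B = lam E) := by
  cases C with
  | var n =>
    simp only [subst] at h
    by_cases h1 : n < k
    · rw [if_pos h1] at h; cases h
    · rw [if_neg h1] at h
      by_cases h2 : n = k
      · rw [if_pos h2] at h; exact Or.inr ⟨by rw [h2], h⟩
      · rw [if_neg h2] at h; cases h
  | bot => cases h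
  | lam E₀ => exact Or.inl ⟨E₀, rfl, (Tm.lam.inj h).symm⟩
  | app _ _ => cases h

theorem hp {B : Tm} (b1 b2 : Tm) (hB : B = app b1 b2) :
    ∀ {C X : Tm}, HStep (subst C 0 B) X →
      (∃ Ms, C = applist (var 0) Ms) ∨ ∃ C', HStep C C' ∧ X = subst C' 0 B := by
  intro C
  induction C with
  | var n =>
    intro X h
    rcases Nat.eq_zero_or_pos n with rfl | hn
    · exact Or.inl ⟨[], rfl⟩
    · exfalso
      simp only [subst] at h
      rw [if_neg (by omega), if_neg (by omega)] at h
      exact no_hstep_var h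
  | bot => intro X h; exact absurd h no_hstep_bot
  | lam C' ih => intro X h; cases h
  | app C₁ C₂ ih1 ih2 =>
    intro X h
    simp only [subst] at h
    generalize hU : subst C₁ 0 B = U at h
    generalize hV : subst C₂ 0 B = V at h
    cases h with
    | beta E _ =>
      rcases subst_eq_lam hU with ⟨E₀, rfl, rfl⟩ | ⟨rfl, rfl⟩
      · refine Or.inr ⟨subst E₀ 0 C₂, HStep.beta E₀ C₂, ?_⟩
        rw [subst_subst E₀ 0 0 C₂ B (le_refl 0), hV]
      · cases hB
    | botApp =>
      rcases subst_eq_bot hU with rfl | ⟨rfl, rfl⟩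
      · exact Or.inr ⟨bot, HStep.botApp C₂, rfl⟩
      · cases hB
    | appL _ s' =>
      rw [← hU] at s'
      rcases ih1 s' with ⟨Ms, rfl⟩ | ⟨C₁', s'', rfl⟩
      · exact Or.inl ⟨Ms ++ [C₂], (applist_snoc ..).symm⟩
      · exact Or.inr ⟨app C₁' C₂, HStep.appL C₂ s'', by rw [← hV]; rfl⟩

theorem hred_subst_var {B : Tm} (b1 b2 : Tm) (hB : B = app b1 b2) {n : ℕ} :
    ∀ {T : Tm}, HRed T (var n) → ∀ C, T = subst C 0 B →
      (∃ Ms, HRed C (applist (var 0) Ms)) ∨ HRed C (var (n+1)) := by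
  intro T h
  induction h using Relation.ReflTransGen.head_induction_on with
  | refl =>
    intro C heq
    cases C with
    | var m =>
      simp only [subst] at heq
      split_ifs at heq with h1 h2
      · omega
      · subst hB; cases heq
      · right
        have : m = n + 1 := by cases heq; omega
        subst this; exact HRed.refl
    | bot => cases heq
    | lam _ => cases heq
    | app _ _ => cases heq
  | @head T X s hrest ih =>
    intro C heq
    subst heq
    rcases hp b1 b2 hB s with ⟨Ms, rfl⟩ | ⟨C', s', rfl⟩
    · exact Or.inl ⟨Ms, HRed.refl⟩
    · rcases ih C' rfl with ⟨Ms, h'⟩ | h'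
      · exact Or.inl ⟨Ms, s'.hred.trans h'⟩
      · exact Or.inr (s'.hred.trans h')

theorem red_iTm_eq {X : Tm} (h : Red iTm X) : X = iTm := by
  induction h with
  | refl => rfl
  | tail _ s ih =>
    subst ih
    cases s with
    | lamC s' => exact absurd s' no_step_var

theorem lift_eq_applist_var : ∀ (Ms : List Tm) (W : Tm), lift W 1 = applist (var 0) Ms →
    ∃ Ms₀, W = applist (var 0) Ms₀ ∧ Ms = Ms₀.map (fun X => lift X 1) := by
  intro Ms
  induction Ms using List.reverseRecOn with
  | nil =>
    intro W h
    cases W with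
    | var m =>
      simp only [lift] at h
      split_ifs at h with h1
      · exact ⟨[], h, rfl⟩
      · cases h
    | bot => cases h
    | lam _ => cases h
    | app _ _ => cases h
  | append_singleton Ms N ih =>
    intro W h
    rw [applist_snoc] at h
    obtain ⟨W₁, W₂, rfl, h1, h2⟩ := lift_eq_app h
    obtain ⟨Ms₀, rfl, rfl⟩ := ih W₁ h1.symm
    exact ⟨Ms₀ ++ [W₂], (applist_snoc ..).symm, by simp [h2]⟩

/-- Forward direction. -/
theorem forward {M R : Tm} (h : Conv (comp M R) iTm) :
    ∃ Ms : List Tm, Red M (lam (applist (var 0) Ms)) := by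
  obtain ⟨P, h1, h2⟩ := h
  have hP := red_iTm_eq h2
  subst hP
  rcases red_lam_inv h1 with ⟨P', hP', hred⟩ | hbot
  · have hPv : P' = var 0 := by
      have := hP'.symm
      simpa [iTm] using this
    subst hPv
    have hhead : HRed (app (lift M 0) (app (lift R 0) (var 0))) (var 0) :=
      st_var_inv (red_st hred)
    obtain ⟨C, hA, hsub⟩ := hred_app_var hhead _ _ rfl
    obtain ⟨M', hMC, hM⟩ := red_lift_inv hA.red M rfl
    obtain ⟨C₀, rfl, rfl⟩ := lift_eq_lam hMC.symm
    rcases hred_subst_var (lift R 0) (var 0) rfl hsub _ rfl with ⟨Ms, hC⟩ | hC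
    · obtain ⟨W, hW, hCW⟩ := red_lift_inv hC.red C₀ rfl
      obtain ⟨Ms₀, rfl, rfl⟩ := lift_eq_applist_var Ms W (by simpa using hW.symm)
      exact ⟨Ms₀, hM.trans (red_lam hCW)⟩
    · exfalso
      obtain ⟨W, hW, _⟩ := red_lift_inv hC.red C₀ rfl
      cases W with
      | var m => simp only [lift] at hW; split_ifs at hW with h1 <;> (cases hW; omega)
      | bot => cases hW
      | lam _ => cases hW
      | app _ _ => cases hW
  · exact absurd hbot (by simp [iTm])

theorem lift_iterLam (n : ℕ) : ∀ (X : Tm) (k : ℕ), lift (iterLam n X) k = iterLam n (lift X (k+n)) := by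
  induction n with
  | zero => intro X k; rfl
  | succ n ih =>
    intro X k
    show lam (lift (iterLam n X) (k+1)) = lam (iterLam n (lift X (k+(n+1))))
    rw [ih X (k+1), show k+1+n = k+(n+1) from by omega]

theorem lift_sel (m k : ℕ) : lift (sel m) k = sel m := by
  show lift (iterLam (m+1) (var m)) k = _
  rw [lift_iterLam]
  simp only [lift]
  rw [if_pos (by omega)]
  rfl

theorem subst_iterLam_var_eq (m : ℕ) : ∀ j, subst (iterLam m (var (j+m))) j (var j) = iterLam m (var (j+m)) := by
  induction m with
  | zero =>
    intro j
    simp [iterLam, subst]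
  | succ m ih =>
    intro j
    show lam (subst (iterLam m (var (j+(m+1)))) (j+1) (lift (var j) 0)) = _
    have hl : lift (var j) 0 = var (j+1) := by simp [lift]
    rw [hl]
    have : j + (m+1) = (j+1) + m := by omega
    rw [this, ih (j+1)]
    rfl

theorem subst_iterLam_var_gt (m : ℕ) : ∀ j (N : Tm),
    subst (iterLam m (var (j+m+1))) j N = iterLam m (var (j+m)) := by
  induction m with
  | zero =>
    intro j N
    simp only [iterLam, subst]
    rw [if_neg (by omega), if_neg (by omega)]
    congr 1
  | succ m ih =>
    intro j N
    show lam (subst (iterLam m (var (j+(m+1)+1))) (j+1) (lift N 0)) = _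
    have h1 : j + (m+1) + 1 = (j+1) + m + 1 := by omega
    rw [h1, ih (j+1) (lift N 0)]
    have h2 : j + 1 + m = j + (m + 1) := by omega
    rw [h2]
    rfl

theorem applist_iterLam_red (m : ℕ) : ∀ (Ns : List Tm), Ns.length = m →
    Red (applist (iterLam m (var m)) Ns) (var 0) := by
  induction m with
  | zero =>
    intro Ns hNs
    rw [List.length_eq_zero_iff] at hNs
    subst hNs
    exact Red.refl
  | succ m ih =>
    intro Ns hNs
    cases Ns with
    | nil => cases hNs
    | cons N Ns' =>
      show Red (applist (app (lam (iterLam m (var (m+1)))) N) Ns') (var 0)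
      have hstep : Step (app (lam (iterLam m (var (m+1)))) N) (iterLam m (var m)) := by
        have := Step.beta (iterLam m (var (m+1))) N
        have heq : subst (iterLam m (var (m+1))) 0 N = iterLam m (var m) := by
          have := subst_iterLam_var_gt m 0 N
          simpa using this
        rwa [heq] at this
      exact (red_applist_left hstep.red Ns').trans (ih Ns' (by simpa using hNs))

/-- Backward direction. -/
theorem backward {M : Tm} {Ms : List Tm} (h : Red M (lam (applist (var 0) Ms))) :
    Conv (comp M (sel Ms.length)) iTm := by
  set m := Ms.length with hm
  refine ⟨iTm, ?_, Red.refl⟩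
  show Red (lam (app (lift M 0) (app (lift (sel m) 0) (var 0)))) iTm
  rw [lift_sel]
  set arg := app (sel m) (var 0) with harg
  have hliftM : Red (lift M 0) (lam (applist (var 0) (Ms.map (fun X => lift X 1)))) := by
    have := red_lift h 0
    rw [show lift (lam (applist (var 0) Ms)) 0
        = lam (applist (var 0) (Ms.map (fun X => lift X 1))) from ?_] at this
    · exact this
    · show lam (lift (applist (var 0) Ms) 1) = _
      rw [lift_applist]
      rfl
  set Ms' := Ms.map (fun X => lift X 1) with hMs'
  have step1 : Red (app (lift M 0) arg) (app (lam (applist (var 0) Ms')) arg) :=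
    red_app hliftM Red.refl
  have step2 : Step (app (lam (applist (var 0) Ms')) arg) (applist arg (Ms'.map (fun X => subst X 0 arg))) := by
    have := Step.beta (applist (var 0) Ms') arg
    rwa [subst_applist, show subst (var 0) 0 arg = arg from by simp [subst]] at this
  set Ns := Ms'.map (fun X => subst X 0 arg) with hNs
  have hNslen : Ns.length = m := by simp [hNs, hMs', hm]
  have step3 : Red (applist arg Ns) (var 0) := by
    have hsel : Step arg (iterLam m (var m)) := by
      rw [harg]
      show Step (app (lam (iterLam m (var m))) (var 0)) _
      have := Step.beta (iterLam m (var m)) (var 0)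
      have heq : subst (iterLam m (var m)) 0 (var 0) = iterLam m (var m) := by
        have := subst_iterLam_var_eq m 0
        simpa using this
      rwa [heq] at this
    exact (red_applist_left hsel.red Ns).trans (applist_iterLam_red m Ns hNslen)
  exact red_lam ((step1.trans step2.red).trans step3)

end Tm

/-- a λ⊥-term has a right inverse iff it reduces to a hnf λz.zM₁…Mₘ. -/
theorem right_invertible_iff (M : Tm) :
    (∃ R, Tm.Conv (Tm.comp M R) Tm.iTm) ↔
      ∃ Ms : List Tm, Tm.Red M (Tm.lam (Tm.applist (Tm.var 0) Ms)) := by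
  constructor
  · rintro ⟨R, h⟩
    exact Tm.forward h
  · rintro ⟨Ms, h⟩
    exact ⟨Tm.sel Ms.length, Tm.backward h⟩
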